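/- arXiv:1502.00883 — 6 statements merged into one kernel-verified Lean document; each statement's English description precedes it below -/
import Mathlib

section
/- Let Z be an ordered *-space, H a VE-space over Z, X a nonempty set, and k : X × X → L*(H) a 2-positive kernel. Fix x, y ∈ X and nonnegative real numbers a, b such that [k(x,x)h,h]_H ≤ a·[h,h]_H and [k(y,y)h,h]_H ≤ b·[h,h]_H for all h ∈ H. Then [k(y,x)h, k(y,x)h]_H ≤ (a·b)·[h,h]_H for all h ∈ H; in particular k(y,x) is bounded in the sense of Loynes. -/
noncomputable section

/-- An ordered `*`-space structure on a complex vector space `Z` with involution: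
a strict cone of selfadjoint elements. -/
structure StarCone (Z : Type*) [AddCommGroup Z] [Module ℂ Z] [StarAddMonoid Z]
    [StarModule ℂ Z] where
  pos : Set Z
  zero_mem : (0 : Z) ∈ pos
  add_mem : ∀ {x y : Z}, x ∈ pos → y ∈ pos → x + y ∈ pos
  smul_mem : ∀ {r : ℝ}, 0 ≤ r → ∀ {x : Z}, x ∈ pos → (r : ℂ) • x ∈ pos
  strict : ∀ {x : Z}, x ∈ pos → -x ∈ pos → x = 0
  star_mem : ∀ {x : Z}, x ∈ pos → star x = x

/-- The partial order induced by the cone: `a ≤ b` iff `b - a` is positive. -/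
def StarCone.le {Z : Type*} [AddCommGroup Z] [Module ℂ Z] [StarAddMonoid Z] [StarModule ℂ Z]
    (O : StarCone Z) (a b : Z) : Prop :=
  b - a ∈ O.pos

/-- A VE-space gramian on `E` over the ordered `*`-space `(Z, O)`: linear in the second
variable, Hermitian, positive and definite. -/
structure Gramian {Z : Type*} [AddCommGroup Z] [Module ℂ Z] [StarAddMonoid Z] [StarModule ℂ Z]
    (O : StarCone Z) (E : Type*) [AddCommGroup E] [Module ℂ E] where
  inner : E → E → Z
  add_right : ∀ x y z : E, inner x (y + z) = inner x y + inner x z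
  smul_right : ∀ (c : ℂ) (x y : E), inner x (c • y) = c • inner x y
  conj_symm : ∀ x y : E, inner x y = star (inner y x)
  inner_self_mem : ∀ x : E, inner x x ∈ O.pos
  definite : ∀ x : E, inner x x = 0 → x = 0

/-- A linear map `T` between VE-spaces over the same ordered `*`-space is adjointable if
it has an adjoint `S` with `[T e, f] = [e, S f]`. -/
def Adjointable {Z : Type*} [AddCommGroup Z] [Module ℂ Z] [StarAddMonoid Z] [StarModule ℂ Z]
    {O : StarCone Z} {E F : Type*} [AddCommGroup E] [Module ℂ E] [AddCommGroup F] [Module ℂ F]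
    (gE : Gramian O E) (gF : Gramian O F) (T : E →ₗ[ℂ] F) : Prop :=
  ∃ S : F →ₗ[ℂ] E, ∀ (e : E) (f : F), gF.inner (T e) f = gE.inner e (S f)



section Aux

variable {Z : Type*} [AddCommGroup Z] [Module ℂ Z] [StarAddMonoid Z] [StarModule ℂ Z]
    {O : StarCone Z}
    {H : Type*} [AddCommGroup H] [Module ℂ H] (gH : Gramian O H)

lemma g_zero_right (u : H) : gH.inner u 0 = 0 := by
  have h := gH.smul_right 0 u 0
  simpa using h

lemma g_zero_left (u : H) : gH.inner 0 u = 0 := by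
  rw [gH.conj_symm, g_zero_right, star_zero]

lemma g_star (u v : H) : star (gH.inner u v) = gH.inner v u :=
  (gH.conj_symm v u).symm

lemma g_smul_left (c : ℂ) (u v : H) : gH.inner (c • u) v = star c • gH.inner u v := by
  rw [gH.conj_symm, gH.smul_right, star_smul, g_star]

lemma g_neg_right (u v : H) : gH.inner u (-v) = -gH.inner u v := by
  have h := gH.smul_right (-1) u v
  simpa using h

lemma g_neg_left (u v : H) : gH.inner (-u) v = -gH.inner u v := by
  rw [gH.conj_symm, g_neg_right, star_neg, g_star]

variable {X : Type*} (k : X → X → (H →ₗ[ℂ] H))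
variable (h2pos : ∀ (x : Fin 2 → X) (h : Fin 2 → H),
      (∑ i : Fin 2, ∑ j : Fin 2, gH.inner (k (x i) (x j) (h j)) (h i)) ∈ O.pos)

include h2pos

lemma sum2 (p q : X) (u v : H) :
    gH.inner (k p p u) u + gH.inner (k p q v) u + gH.inner (k q p u) v
      + gH.inner (k q q v) v ∈ O.pos := by
  have h := h2pos ![p, q] ![u, v]
  simpa [Fin.sum_univ_two, add_assoc] using h

lemma diag_pos (p : X) (u : H) : gH.inner (k p p u) u ∈ O.pos := by
  have h := sum2 gH k h2pos p p u 0
  simpa [g_zero_right, g_zero_left, map_zero] using h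

lemma diag_sa (p : X) (u : H) : star (gH.inner (k p p u) u) = gH.inner (k p p u) u :=
  O.star_mem (diag_pos gH k h2pos p u)

lemma hermit (p q : X) (u v : H) :
    gH.inner (k q p u) v = gH.inner u (k p q v) := by
  have key : ∀ w : H, gH.inner u (k p q w) + gH.inner w (k q p u)
      = gH.inner (k p q w) u + gH.inner (k q p u) w := by
    intro w
    have hpos := sum2 gH k h2pos p q u w
    have hsa := O.star_mem hpos
    have e1 := diag_sa gH k h2pos p u
    have e2 := diag_sa gH k h2pos q w
    rw [star_add, star_add, star_add, e1, e2, g_star, g_star] at hsa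
    calc gH.inner u (k p q w) + gH.inner w (k q p u)
        = gH.inner (k p p u) u + gH.inner u (k p q w) + gH.inner w (k q p u)
            + gH.inner (k q q w) w
          - (gH.inner (k p p u) u + gH.inner (k q q w) w) := by abel
      _ = gH.inner (k p p u) u + gH.inner (k p q w) u + gH.inner (k q p u) w
            + gH.inner (k q q w) w
          - (gH.inner (k p p u) u + gH.inner (k q q w) w) := by rw [hsa]
      _ = gH.inner (k p q w) u + gH.inner (k q p u) w := by abel
  have h1 := key v
  have h2 := key (Complex.I • v)
  rw [map_smul, gH.smul_right, g_smul_left, g_smul_left, gH.smul_right] at h2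
  -- h2 : I • α + star I • β = star I • γ + I • δ
  have h3 := congrArg (fun z => Complex.I • z) h2
  simp only [smul_add, smul_smul, Complex.I_mul_I, Complex.star_def, Complex.conj_I,
    mul_neg, neg_mul, neg_neg, neg_smul, one_smul, smul_neg] at h3
  -- h3 : -α + β = γ + -δ  (hopefully)
  have h4 : gH.inner u (k p q v) + gH.inner u (k p q v)
      = gH.inner (k q p u) v + gH.inner (k q p u) v := by
    calc gH.inner u (k p q v) + gH.inner u (k p q v)
        = (gH.inner u (k p q v) + gH.inner v (k q p u))
          - (-gH.inner u (k p q v) + gH.inner v (k q p u)) := by abel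
      _ = (gH.inner (k p q v) u + gH.inner (k q p u) v)
          - (gH.inner (k p q v) u + -gH.inner (k q p u) v) := by rw [h1, h3]
      _ = gH.inner (k q p u) v + gH.inner (k q p u) v := by abel
  have h5 : (2:ℂ) • gH.inner u (k p q v) = (2:ℂ) • gH.inner (k q p u) v := by
    rw [two_smul, two_smul]; exact h4
  exact (smul_right_injective Z (two_ne_zero (α := ℂ)) h5).symm

lemma cross_zero (p q : X)
    (hp : ∀ u : H, gH.inner (k p p u) u = 0) (hq : ∀ v : H, gH.inner (k q q v) v = 0) :
    ∀ u v : H, gH.inner (k q p u) v = 0 := by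
  have cross : ∀ u v : H, gH.inner (k p q v) u + gH.inner (k q p u) v ∈ O.pos := by
    intro u v
    have h := sum2 gH k h2pos p q u v
    rw [hp u, hq v] at h
    simpa using h
  have crosseq : ∀ u v : H, gH.inner (k p q v) u + gH.inner (k q p u) v = 0 := by
    intro u v
    refine O.strict (cross u v) ?_
    have h := cross u (-v)
    rw [map_neg, g_neg_left, g_neg_right] at h
    rw [neg_add]
    exact h
  intro u v
  have h1 := crosseq u v
  have h2 := crosseq u (Complex.I • v)
  rw [map_smul, g_smul_left, gH.smul_right] at h2
  have h3 := congrArg (fun z => Complex.I • z) h2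
  simp only [smul_add, smul_neg, smul_smul, Complex.star_def, Complex.conj_I, mul_neg, neg_mul,
    neg_neg, Complex.I_mul_I, neg_smul, one_smul, smul_zero] at h3
  -- h3 : X1 + -X2 = 0 (hopefully)
  have h4 : gH.inner (k q p u) v + gH.inner (k q p u) v = 0 := by
    calc gH.inner (k q p u) v + gH.inner (k q p u) v
        = (gH.inner (k p q v) u + gH.inner (k q p u) v)
          - (gH.inner (k p q v) u + -gH.inner (k q p u) v) := by abel
      _ = 0 := by rw [h1, h3]; simp
  have h5 : (2 : ℂ) • gH.inner (k q p u) v = (2 : ℂ) • (0 : Z) := by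
    rw [two_smul, smul_zero]; exact h4
  exact smul_right_injective Z (two_ne_zero (α := ℂ)) h5

end Aux

section Core

variable {Z : Type*} [AddCommGroup Z] [Module ℂ Z] [StarAddMonoid Z] [StarModule ℂ Z]
    {O : StarCone Z}
    {H : Type*} [AddCommGroup H] [Module ℂ H] (gH : Gramian O H)
    {X : Type*} (k : X → X → (H →ₗ[ℂ] H))
    (h2pos : ∀ (x : Fin 2 → X) (h : Fin 2 → H),
      (∑ i : Fin 2, ∑ j : Fin 2, gH.inner (k (x i) (x j) (h j)) (h i)) ∈ O.pos)

include h2pos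

lemma core_bound (p q : X) (α β : ℝ) (hα : 0 ≤ α) (hβ : 0 < β)
    (hp : ∀ u : H, O.le (gH.inner (k p p u) u) ((α : ℂ) • gH.inner u u))
    (hq : ∀ u : H, O.le (gH.inner (k q q u) u) ((β : ℂ) • gH.inner u u))
    (h0 : H) :
    O.le (gH.inner (k q p h0) (k q p h0)) (((α * β : ℝ) : ℂ) • gH.inner h0 h0) := by
  set w : H := k q p h0 with hw
  set t : ℝ := β⁻¹ with ht
  have M := sum2 gH k h2pos p q h0 ((-(t : ℂ)) • w)
  have e2 : gH.inner (k p q ((-(t : ℂ)) • w)) h0 = (-(t : ℂ)) • gH.inner w w := by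
    rw [map_smul, g_smul_left, hermit gH k h2pos q p w h0, ← hw]
    congr 1
    simp [Complex.star_def]
  have e3 : gH.inner (k q p h0) ((-(t : ℂ)) • w) = (-(t : ℂ)) • gH.inner w w := by
    rw [gH.smul_right, ← hw]
  have e4 : gH.inner (k q q ((-(t : ℂ)) • w)) ((-(t : ℂ)) • w)
      = (((t : ℂ)) * (t : ℂ)) • gH.inner (k q q w) w := by
    rw [map_smul, g_smul_left, gH.smul_right, smul_smul]
    congr 1
    simp [Complex.star_def]
  rw [e2, e3, e4] at M
  have ht2 : (0 : ℝ) ≤ t * t := mul_self_nonneg t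
  have S1 := O.add_mem (O.add_mem M (hp h0)) (O.smul_mem ht2 (hq w))
  have S2 := O.smul_mem hβ.le S1
  have key : ((α * β : ℝ) : ℂ) • gH.inner h0 h0 - gH.inner w w
      = ((β : ℝ) : ℂ) • (gH.inner (k p p h0) h0 + (-(t : ℂ)) • gH.inner w w
          + (-(t : ℂ)) • gH.inner w w + ((t : ℂ) * (t : ℂ)) • gH.inner (k q q w) w
        + ((α : ℂ) • gH.inner h0 h0 - gH.inner (k p p h0) h0)
        + ((t * t : ℝ) : ℂ) • ((β : ℂ) • gH.inner w w - gH.inner (k q q w) w)) := by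
    have hβ' : (β : ℂ) ≠ 0 := by
      exact_mod_cast Complex.ofReal_ne_zero.mpr hβ.ne'
    match_scalars <;> (try simp only [ht]) <;> push_cast <;> field_simp <;> ring
  show ((α * β : ℝ) : ℂ) • gH.inner h0 h0 - gH.inner w w ∈ O.pos
  rw [key]
  exact S2

end Core

/-- For a `2`-positive kernel `k`, if `[k(x,x)h,h] ≤ a[h,h]` and
`[k(y,y)h,h] ≤ b[h,h]` for all `h` (with `a, b ≥ 0`), then
`[k(y,x)h, k(y,x)h] ≤ a·b·[h,h]` for all `h`; in particular `k(y,x)` is bounded in the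
sense of Loynes. -/
theorem two_positive_kernel_bounded
    {Z : Type*} [AddCommGroup Z] [Module ℂ Z] [StarAddMonoid Z] [StarModule ℂ Z]
    (O : StarCone Z)
    {H : Type*} [AddCommGroup H] [Module ℂ H] (gH : Gramian O H)
    {X : Type*} [Nonempty X]
    (k : X → X → (H →ₗ[ℂ] H))
    (hadj : ∀ x y : X, Adjointable gH gH (k x y))
    (h2pos : ∀ (x : Fin 2 → X) (h : Fin 2 → H),
      (∑ i : Fin 2, ∑ j : Fin 2, gH.inner (k (x i) (x j) (h j)) (h i)) ∈ O.pos)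
    (x y : X) (a b : ℝ) (ha : 0 ≤ a) (hb : 0 ≤ b)
    (hax : ∀ h : H, O.le (gH.inner (k x x h) h) ((a : ℂ) • gH.inner h h))
    (hby : ∀ h : H, O.le (gH.inner (k y y h) h) ((b : ℂ) • gH.inner h h)) :
    (∀ h : H, O.le (gH.inner (k y x h) (k y x h)) (((a * b : ℝ) : ℂ) • gH.inner h h)) ∧
      (∃ μ : ℝ, 0 ≤ μ ∧
        ∀ h : H, O.le (gH.inner (k y x h) (k y x h)) ((μ : ℂ) • gH.inner h h)) := by
  have main : ∀ h : H,
      O.le (gH.inner (k y x h) (k y x h)) (((a * b : ℝ) : ℂ) • gH.inner h h) := by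
    intro h
    rcases hb.lt_or_eq with hb' | hb'
    · exact core_bound gH k h2pos x y a b ha hb' hax hby h
    · -- b = 0
      subst hb'
      rcases ha.lt_or_eq with ha' | ha'
      · -- a > 0 : k x y vanishes
        have hky : ∀ u : H, k x y u = 0 := by
          intro u
          have h0 := core_bound gH k h2pos y x 0 a le_rfl ha' hby hax u
          have h1 : ((0 * a : ℝ) : ℂ) • gH.inner u u
              - gH.inner (k x y u) (k x y u) ∈ O.pos := h0
          have hmem : -gH.inner (k x y u) (k x y u) ∈ O.pos := by simpa using h1
          exact gH.definite _ (O.strict (gH.inner_self_mem (k x y u)) hmem)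
        have hP : gH.inner (k y x h) (k y x h) = 0 := by
          rw [hermit gH k h2pos x y h (k y x h), hky, g_zero_right]
        show ((a * 0 : ℝ) : ℂ) • gH.inner h h - gH.inner (k y x h) (k y x h) ∈ O.pos
        rw [hP]
        simpa using O.zero_mem
      · -- a = 0
        subst ha'
        have dxx : ∀ u : H, gH.inner (k x x u) u = 0 := by
          intro u
          refine O.strict (diag_pos gH k h2pos x u) ?_
          have h1 : ((0 : ℝ) : ℂ) • gH.inner u u - gH.inner (k x x u) u ∈ O.pos := hax u
          simpa using h1
        have dyy : ∀ u : H, gH.inner (k y y u) u = 0 := by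
          intro u
          refine O.strict (diag_pos gH k h2pos y u) ?_
          have h1 : ((0 : ℝ) : ℂ) • gH.inner u u - gH.inner (k y y u) u ∈ O.pos := hby u
          simpa using h1
        have hP : gH.inner (k y x h) (k y x h) = 0 :=
          cross_zero gH k h2pos x y dxx dyy h (k y x h)
        show ((0 * 0 : ℝ) : ℂ) • gH.inner h h - gH.inner (k y x h) (k y x h) ∈ O.pos
        rw [hP]
        simpa using O.zero_mem
  exact ⟨main, ⟨a * b, mul_nonneg ha hb, fun h => main h⟩⟩
end
end

section
/- Let Z be an ordered *-space, H a VE-space over Z, X a nonempty set, and k : X × X → L*(H) a kernel. If (K,V) and (K',V') are two minimal VE-space linearisations of k, then there exists a unitary (VE-space isomorphism) U : K → K' such that U V(x) = V'(x) for all x ∈ X; that is, a minimal VE-space linearisation of k is unique up to unitary equivalence. -/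
noncomputable section

section Aux

variable {Z : Type*} [AddCommGroup Z] [Module ℂ Z] [StarAddMonoid Z] [StarModule ℂ Z]
  {O : StarCone Z} {E : Type*} [AddCommGroup E] [Module ℂ E]

lemma Gramian.inner_zero_right (g : Gramian O E) (x : E) : g.inner x 0 = 0 := by
  have h := g.smul_right 0 x 0
  simpa using h

lemma Gramian.inner_zero_left (g : Gramian O E) (x : E) : g.inner 0 x = 0 := by
  rw [g.conj_symm, g.inner_zero_right, star_zero]

/-- The gramian with fixed first argument, as a linear map. -/
def Gramian.innerR (g : Gramian O E) (a : E) : E →ₗ[ℂ] Z where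
  toFun := g.inner a
  map_add' := g.add_right a
  map_smul' := fun c y => g.smul_right c a y

@[simp] lemma Gramian.innerR_apply (g : Gramian O E) (a y : E) :
    g.innerR a y = g.inner a y := rfl

end Aux

/-- uniqueness, up to unitary equivalence, of minimal VE-space
linearisations of a kernel `k` with values adjointable operators on a VE-space. -/
theorem minimal_linearisation_unique
    {Z : Type*} [AddCommGroup Z] [Module ℂ Z] [StarAddMonoid Z] [StarModule ℂ Z]
    (O : StarCone Z)
    {H : Type*} [AddCommGroup H] [Module ℂ H] (gH : Gramian O H)
    {X : Type*} [Nonempty X]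
    (k : X → X → (H →ₗ[ℂ] H))
    {K : Type*} [AddCommGroup K] [Module ℂ K] (gK : Gramian O K)
    {K' : Type*} [AddCommGroup K'] [Module ℂ K'] (gK' : Gramian O K')
    (V : X → (H →ₗ[ℂ] K)) (Vadj : X → (K →ₗ[ℂ] H))
    (V' : X → (H →ₗ[ℂ] K')) (V'adj : X → (K' →ₗ[ℂ] H))
    -- `V x` is adjointable with adjoint `Vadj x`
    (hV : ∀ (x : X) (e : H) (f : K), gK.inner (V x e) f = gH.inner e (Vadj x f))
    (hV' : ∀ (x : X) (e : H) (f : K'), gK'.inner (V' x e) f = gH.inner e (V'adj x f))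
    -- both are linearisations of `k`:  `k(x,y) = V(x)* V(y)`
    (hk : ∀ (x y : X) (h : H), k x y h = Vadj x (V y h))
    (hk' : ∀ (x y : X) (h : H), k x y h = V'adj x (V' y h))
    -- minimality
    (hmin : Submodule.span ℂ {v : K | ∃ (x : X) (h : H), V x h = v} = ⊤)
    (hmin' : Submodule.span ℂ {v : K' | ∃ (x : X) (h : H), V' x h = v} = ⊤) :
    ∃ U : K →ₗ[ℂ] K', Function.Bijective U ∧
      (∀ f g : K, gK'.inner (U f) (U g) = gK.inner f g) ∧
      (∀ (x : X) (h : H), U (V x h) = V' x h) := by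
  classical
  set S : Submodule ℂ (K × K') :=
    Submodule.span ℂ {p : K × K' | ∃ (x : X) (h : H), (V x h, V' x h) = p} with hS
  -- step 1: gramian identity against generators
  have key1 : ∀ (x : X) (h : H) (q : K × K'), q ∈ S →
      gK'.inner (V' x h) q.2 = gK.inner (V x h) q.1 := by
    intro x h q hq
    have hle : S ≤ LinearMap.eqLocus
        ((gK'.innerR (V' x h)).comp (LinearMap.snd ℂ K K'))
        ((gK.innerR (V x h)).comp (LinearMap.fst ℂ K K')) := by
      rw [hS]
      apply Submodule.span_le.2
      rintro p ⟨y, h', rfl⟩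
      show gK'.inner (V' x h) (V' y h') = gK.inner (V x h) (V y h')
      rw [hV', ← hk', hk, ← hV]
    exact hle hq
  -- step 2: full gramian identity on S
  have key : ∀ p ∈ S, ∀ q ∈ S, gK'.inner p.2 q.2 = gK.inner p.1 q.1 := by
    intro p hp q hq
    have hle : S ≤ LinearMap.eqLocus
        ((gK'.innerR q.2).comp (LinearMap.snd ℂ K K'))
        ((gK.innerR q.1).comp (LinearMap.fst ℂ K K')) := by
      rw [hS]
      apply Submodule.span_le.2
      rintro r ⟨y, h', rfl⟩
      show gK'.inner q.2 (V' y h') = gK.inner q.1 (V y h')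
      have := key1 y h' q hq
      rw [gK'.conj_symm, gK.conj_symm, this]
    have := hle hp
    have h2 : gK'.inner q.2 p.2 = gK.inner q.1 p.1 := this
    rw [gK'.conj_symm, gK.conj_symm, h2]
  -- existence of images
  have hfst : ∀ f : K, ∃ g : K', (f, g) ∈ S := by
    have hle : Submodule.span ℂ {v : K | ∃ (x : X) (h : H), V x h = v}
        ≤ S.map (LinearMap.fst ℂ K K') := by
      apply Submodule.span_le.2
      rintro v ⟨x, h, rfl⟩
      exact ⟨(V x h, V' x h), Submodule.subset_span ⟨x, h, rfl⟩, rfl⟩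
    intro f
    have hf : f ∈ S.map (LinearMap.fst ℂ K K') := hle (hmin ▸ Submodule.mem_top)
    obtain ⟨p, hp, hp1⟩ := hf
    refine ⟨p.2, ?_⟩
    have : (p.1, p.2) = (f, p.2) := by rw [← hp1]; rfl
    simpa [← this] using hp
  have hsnd : ∀ g : K', ∃ f : K, (f, g) ∈ S := by
    have hle : Submodule.span ℂ {v : K' | ∃ (x : X) (h : H), V' x h = v}
        ≤ S.map (LinearMap.snd ℂ K K') := by
      apply Submodule.span_le.2
      rintro v ⟨x, h, rfl⟩
      exact ⟨(V x h, V' x h), Submodule.subset_span ⟨x, h, rfl⟩, rfl⟩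
    intro g
    have hg : g ∈ S.map (LinearMap.snd ℂ K K') := hle (hmin' ▸ Submodule.mem_top)
    obtain ⟨p, hp, hp2⟩ := hg
    refine ⟨p.1, ?_⟩
    have : (p.1, p.2) = (p.1, g) := by rw [← hp2]; rfl
    simpa [← this] using hp
  -- uniqueness of images
  have huniq : ∀ (f : K) (g g' : K'), (f, g) ∈ S → (f, g') ∈ S → g = g' := by
    intro f g g' h1 h2
    have hmem : ((0 : K), g - g') ∈ S := by
      have := S.sub_mem h1 h2
      simpa [Prod.mk_sub_mk] using this
    have h0 := key _ hmem _ hmem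
    simp only [gK.inner_zero_left] at h0
    have : g - g' = 0 := gK'.definite _ h0
    exact sub_eq_zero.mp this
  -- define the map
  set U0 : K → K' := fun f => Classical.choose (hfst f) with hU0def
  have hU0 : ∀ f : K, (f, U0 f) ∈ S := fun f => Classical.choose_spec (hfst f)
  have hadd : ∀ f g : K, U0 (f + g) = U0 f + U0 g := by
    intro f g
    have hm : (f + g, U0 f + U0 g) ∈ S := by
      have := S.add_mem (hU0 f) (hU0 g)
      simpa [Prod.mk_add_mk] using this
    exact huniq _ _ _ (hU0 (f + g)) hm
  have hsmul : ∀ (c : ℂ) (f : K), U0 (c • f) = c • U0 f := by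
    intro c f
    have hm : (c • f, c • U0 f) ∈ S := by
      have := S.smul_mem c (hU0 f)
      simpa [Prod.smul_mk] using this
    exact huniq _ _ _ (hU0 (c • f)) hm
  refine ⟨⟨⟨U0, hadd⟩, fun c f => hsmul c f⟩, ?_, ?_, ?_⟩
  · constructor
    · intro f g hfg
      have hm : (f - g, U0 f - U0 g) ∈ S := by
        have := S.sub_mem (hU0 f) (hU0 g)
        simpa [Prod.mk_sub_mk] using this
      simp only [LinearMap.coe_mk, AddHom.coe_mk] at hfg
      rw [hfg, sub_self] at hm
      have h0 := key _ hm _ hm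
      simp only [gK'.inner_zero_left] at h0
      have : f - g = 0 := gK.definite _ h0.symm
      exact sub_eq_zero.mp this
    · intro g
      obtain ⟨f, hf⟩ := hsnd g
      exact ⟨f, huniq f _ _ (hU0 f) hf⟩
  · intro f g
    exact key _ (hU0 f) _ (hU0 g)
  · intro x h
    exact huniq _ _ _ (hU0 (V x h)) (Submodule.subset_span ⟨x, h, rfl⟩)
end
end

section
/- Let X be a nonempty set, Z an ordered *-space, H a VE-space over Z, and R a VE-space over Z whose underlying vector space is a linear subspace of the space of all functions X → H with pointwise operations. Then R is an H-reproducing kernel VE-space on X (i.e. there exists a Hermitian kernel k : X × X → L*(H) with kernel functions k_x h := k(·,x)h ∈ R and reproducing property [f(x),h]_H = [f, k_x h]_R for all f ∈ R, x ∈ X, h ∈ H) if and only if for every x ∈ X the evaluation operator E_x : R → H, E_x f = f(x), is adjointable as a linear map between the VE-spaces R and H. -/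
noncomputable section

/-- The evaluation operator at a point `x`, on a linear subspace of functions `X → H`. -/
def evalLM {X H : Type*} [AddCommGroup H] [Module ℂ H] (R : Submodule ℂ (X → H)) (x : X) :
    ↥R →ₗ[ℂ] H where
  toFun f := (f : X → H) x
  map_add' f g := rfl
  map_smul' c f := rfl

/-- a VE-space `R` of `H`-valued functions on `X` is an `H`-reproducing
kernel VE-space if and only if all evaluation operators `E_x : R → H` are adjointable. -/
theorem reproducing_kernel_iff_evaluations_adjointable
    {Z : Type*} [AddCommGroup Z] [Module ℂ Z] [StarAddMonoid Z] [StarModule ℂ Z]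
    (O : StarCone Z)
    {H : Type*} [AddCommGroup H] [Module ℂ H] (gH : Gramian O H)
    {X : Type*} [Nonempty X]
    (R : Submodule ℂ (X → H)) (gR : Gramian O ↥R) :
    (∃ k : X → X → (H →ₗ[ℂ] H),
      -- `k` has values adjointable operators and is Hermitian: `k(y,x) = k(x,y)*`
      (∀ x y : X, Adjointable gH gH (k x y)) ∧
      (∀ (x y : X) (f g : H), gH.inner (k y x f) g = gH.inner f (k x y g)) ∧
      -- the kernel functions `k_x h = k(·,x)h` belong to `R` and reproduce
      ∃ hmem : ∀ (x : X) (h : H), (fun y => k y x h) ∈ R,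
        ∀ (f : ↥R) (x : X) (h : H),
          gH.inner ((f : X → H) x) h = gR.inner f ⟨fun y => k y x h, hmem x h⟩) ↔
    (∀ x : X, Adjointable gR gH (evalLM R x)) := by
  constructor
  · rintro ⟨k, _hadj, _herm, hmem, hrep⟩ x
    refine ⟨{ toFun := fun h => ⟨fun y => k y x h, hmem x h⟩,
              map_add' := ?_, map_smul' := ?_ }, ?_⟩
    · intro a b; ext y; simp [map_add]
    · intro c a; ext y; simp
    · intro e f; exact hrep e x f
  · intro hadj
    choose S hS using hadj
    refine ⟨fun x y => (evalLM R x).comp (S y), ?_, ?_, ?_⟩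
    · intro x y
      refine ⟨(evalLM R y).comp (S x), fun e f => ?_⟩
      have h1 := hS x (S y e) f
      have h2 := hS y (S x f) e
      simp only [LinearMap.comp_apply] at *
      rw [h1, gR.conj_symm, ← h2, ← gH.conj_symm]
    · intro x y f g
      have h1 := hS y (S x f) g
      have h2 := hS x (S y g) f
      simp only [LinearMap.comp_apply]
      rw [h1, gR.conj_symm, ← h2, ← gH.conj_symm]
    · have hmem : ∀ (x : X) (h : H),
          (fun y => ((evalLM R y).comp (S x)) h) ∈ R := by
        intro x h
        have : (fun y => ((evalLM R y).comp (S x)) h) = ((S x h : ↥R) : X → H) := rfl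
        rw [this]; exact (S x h).2
      refine ⟨hmem, fun f x h => ?_⟩
      have := hS x f h
      convert this using 2 <;> rfl
end
end

section
/- Let X be a nonempty set, Z an ordered *-space, H a VE-space over Z, k : X × X → L*(H) a Hermitian kernel, and R an H-reproducing kernel VE-space on X with kernel k. Define V(x) : H → R by V(x)h = k_x h := k(·,x)h. Then for every x ∈ X the map V(x) is adjointable, with adjoint V(x)* : R → H given by V(x)* f = f(x), and k(y,x) = V(y)*V(x) for all x,y ∈ X; in particular (R, V) is a VE-space linearisation of k. -/
noncomputable section

/-- for an `H`-reproducing kernel VE-space `R` on `X` with Hermitian kernel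
`k`, the maps `V(x) : h ↦ k_x h = k(·,x)h` are adjointable with adjoint `f ↦ f(x)`, and
`k(y,x) = V(y)* V(x)`; in particular `(R, V)` is a VE-space linearisation of `k`. -/
theorem reproducing_kernel_space_is_linearisation
    {Z : Type*} [AddCommGroup Z] [Module ℂ Z] [StarAddMonoid Z] [StarModule ℂ Z]
    (O : StarCone Z)
    {H : Type*} [AddCommGroup H] [Module ℂ H] (gH : Gramian O H)
    {X : Type*} [Nonempty X]
    (k : X → X → (H →ₗ[ℂ] H))
    (hadj : ∀ x y : X, Adjointable gH gH (k x y))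
    (hherm : ∀ (x y : X) (f g : H), gH.inner (k y x f) g = gH.inner f (k x y g))
    (R : Submodule ℂ (X → H)) (gR : Gramian O ↥R)
    (hmem : ∀ (x : X) (h : H), (fun y => k y x h) ∈ R)
    (hrepr : ∀ (f : ↥R) (x : X) (h : H),
      gH.inner ((f : X → H) x) h = gR.inner f ⟨fun y => k y x h, hmem x h⟩) :
    ∃ V : X → (H →ₗ[ℂ] ↥R),
      -- `V(x) h` is the kernel function `k_x h`
      (∀ (x : X) (h : H), (V x h : X → H) = fun y => k y x h) ∧
      -- `V(x)` is adjointable, with adjoint the evaluation `f ↦ f(x)`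
      (∀ (x : X) (h : H) (f : ↥R), gR.inner (V x h) f = gH.inner h ((f : X → H) x)) ∧
      -- `k(y,x) = V(y)* V(x)`, the adjoint `V(y)*` being the evaluation at `y`
      (∀ (x y : X) (h : H), (V x h : X → H) y = k y x h) := by

  refine ⟨fun x => {
    toFun := fun h => ⟨fun y => k y x h, hmem x h⟩
    map_add' := by
      intro a b
      apply Subtype.ext
      funext y
      simp [map_add]
    map_smul' := by
      intro c a
      apply Subtype.ext
      funext y
      simp }, ?_, ?_, ?_⟩
  · intro x h; rfl
  · intro x h f
    have h1 := hrepr f x h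
    have h2 := gR.conj_symm (⟨fun y => k y x h, hmem x h⟩ : ↥R) f
    have h3 := gH.conj_symm h ((f : X → H) x)
    simp only [LinearMap.coe_mk, AddHom.coe_mk]
    rw [h2, ← h1, ← h3]
  · intro x y h; rfl
end
end

section
/- Let X be a nonempty set, Z an ordered *-space, H a VE-space over Z, k : X × X → L*(H) a Hermitian kernel, and (K,V) a minimal VE-space linearisation of k. Then the linear map U : K → (functions X → H), (Uf)(x) = V(x)* f, is injective; and its range R = { V(·)* f : f ∈ K }, endowed with the gramian [Uf, Ug]_R := [f,g]_K (well defined by injectivity), is a minimal H-reproducing kernel VE-space on X with reproducing kernel k. -/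
noncomputable section

/-- from a minimal VE-space linearisation `(K, V)` of a Hermitian kernel `k`,
the map `U : K → (X → H)`, `(U f)(x) = V(x)* f`, is injective, and its range, with the
transported gramian `[U f, U g] := [f, g]_K`, is a minimal `H`-reproducing kernel
VE-space on `X` with reproducing kernel `k`. -/
theorem minimal_linearisation_to_reproducing_kernel
    {Z : Type*} [AddCommGroup Z] [Module ℂ Z] [StarAddMonoid Z] [StarModule ℂ Z]
    (O : StarCone Z)
    {H : Type*} [AddCommGroup H] [Module ℂ H] (gH : Gramian O H)
    {X : Type*} [Nonempty X]
    (k : X → X → (H →ₗ[ℂ] H))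
    (hadj : ∀ x y : X, Adjointable gH gH (k x y))
    (hherm : ∀ (x y : X) (f g : H), gH.inner (k y x f) g = gH.inner f (k x y g))
    {K : Type*} [AddCommGroup K] [Module ℂ K] (gK : Gramian O K)
    (V : X → (H →ₗ[ℂ] K)) (Vadj : X → (K →ₗ[ℂ] H))
    (hV : ∀ (x : X) (e : H) (f : K), gK.inner (V x e) f = gH.inner e (Vadj x f))
    (hk : ∀ (x y : X) (h : H), k x y h = Vadj x (V y h))
    (hmin : Submodule.span ℂ {v : K | ∃ (x : X) (h : H), V x h = v} = ⊤)
    (U : K →ₗ[ℂ] (X → H)) (hU : ∀ (f : K) (x : X), U f x = Vadj x f) :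
    Function.Injective U ∧
    ∃ gR : Gramian O ↥(LinearMap.range U),
      -- the gramian on the range is the transported one
      (∀ f g : K, gR.inner ⟨U f, LinearMap.mem_range_self U f⟩
          ⟨U g, LinearMap.mem_range_self U g⟩ = gK.inner f g) ∧
      -- the kernel functions belong to the range and reproduce
      ∃ hmem : ∀ (x : X) (h : H), (fun y => k y x h) ∈ LinearMap.range U,
        (∀ (f : ↥(LinearMap.range U)) (x : X) (h : H),
          gH.inner ((f : X → H) x) h = gR.inner f ⟨fun y => k y x h, hmem x h⟩) ∧
        -- minimality of the reproducing kernel space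
        Submodule.span ℂ {g : ↥(LinearMap.range U) |
          ∃ (x : X) (h : H), (g : X → H) = fun y => k y x h} = ⊤ := by
  -- inner with zero on the right is zero
  have hzeroH : ∀ h : H, gH.inner h (0 : H) = 0 := by
    intro h
    have := gH.smul_right 0 h (0 : H)
    simpa using this
  -- injectivity
  have key : ∀ f : K, U f = 0 → f = 0 := by
    intro f hf
    have hgen : ∀ g : K, gK.inner g f = 0 := by
      intro g
      have hg : g ∈ Submodule.span ℂ {v : K | ∃ (x : X) (h : H), V x h = v} := by
        rw [hmin]; trivial
      induction hg using Submodule.span_induction with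
      | mem v hv =>
        obtain ⟨x, h, rfl⟩ := hv
        have hVadj : Vadj x f = 0 := by
          rw [← hU, hf]; rfl
        rw [hV, hVadj, hzeroH]
      | zero =>
        have h0 : gK.inner f (0 : K) = 0 := by simpa using gK.smul_right 0 f (0 : K)
        rw [gK.conj_symm, h0, star_zero]
      | add a b _ _ ha hb =>
        rw [gK.conj_symm, gK.add_right, star_add, ← gK.conj_symm a f, ← gK.conj_symm b f,
          ha, hb, add_zero]
      | smul c a _ ha =>
        rw [gK.conj_symm, gK.smul_right, star_smul, ← gK.conj_symm a f, ha, smul_zero]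
    exact gK.definite f (hgen f)
  have hinj : Function.Injective U := by
    intro a b hab
    have h0 : U (a - b) = 0 := by rw [map_sub, hab, sub_self]
    have := key _ h0
    exact sub_eq_zero.mp this
  refine ⟨hinj, ?_⟩
  -- the equivalence K ≃ range U
  let e : K ≃ₗ[ℂ] ↥(LinearMap.range U) := LinearEquiv.ofInjective U hinj
  have he : ∀ f : K, ((e f : ↥(LinearMap.range U)) : X → H) = U f := fun f => rfl
  have hesymm : ∀ (f : K) (hf : U f ∈ LinearMap.range U),
      e.symm ⟨U f, hf⟩ = f := by
    intro f hf
    have h1 : e (e.symm ⟨U f, hf⟩) = ⟨U f, hf⟩ := e.apply_symm_apply _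
    have h2 : U (e.symm ⟨U f, hf⟩) = U f := congrArg Subtype.val h1
    exact hinj h2
  -- transported gramian
  refine ⟨{ inner := fun a b => gK.inner (e.symm a) (e.symm b)
            add_right := by
              intro x y z
              show gK.inner (e.symm x) (e.symm (y + z)) = _
              rw [map_add, gK.add_right]
            smul_right := by
              intro c x y
              show gK.inner (e.symm x) (e.symm (c • y)) = _
              rw [map_smul, gK.smul_right]
            conj_symm := by intro x y; exact gK.conj_symm _ _
            inner_self_mem := by intro x; exact gK.inner_self_mem _
            definite := by
              intro x hx
              have := gK.definite _ hx
              have : x = e 0 := by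
                rw [← this, e.apply_symm_apply]
              rw [this, map_zero] }, ?_, ?_⟩
  · intro f g
    simp only [hesymm]
  · have hUk : ∀ (x : X) (h : H), U (V x h) = fun y => k y x h := by
      intro x h
      funext y
      rw [hU, hk]
    have hmem : ∀ (x : X) (h : H), (fun y => k y x h) ∈ LinearMap.range U := by
      intro x h
      exact ⟨V x h, hUk x h⟩
    refine ⟨hmem, ?_, ?_⟩
    · intro f x h
      obtain ⟨g, hg⟩ := f.2
      have hf : f = ⟨U g, LinearMap.mem_range_self U g⟩ := by
        apply Subtype.ext; exact hg.symm
      have h1 : e.symm f = g := by rw [hf]; exact hesymm g _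
      have h2 : e.symm (⟨fun y => k y x h, hmem x h⟩ : ↥(LinearMap.range U)) = V x h := by
        have : (⟨fun y => k y x h, hmem x h⟩ : ↥(LinearMap.range U))
            = ⟨U (V x h), LinearMap.mem_range_self U (V x h)⟩ := by
          apply Subtype.ext
          exact (hUk x h).symm
        rw [this]; exact hesymm (V x h) _
      show gH.inner ((f : X → H) x) h = gK.inner (e.symm f) (e.symm _)
      rw [h1, h2]
      have h3 : (f : X → H) x = Vadj x g := by
        rw [hf]; exact hU g x
      rw [h3, gK.conj_symm, hV, ← gH.conj_symm]
    · -- minimality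
      have hmap : Submodule.map (e : K →ₗ[ℂ] ↥(LinearMap.range U))
          (Submodule.span ℂ {v : K | ∃ (x : X) (h : H), V x h = v}) = ⊤ := by
        rw [hmin, Submodule.map_top, LinearEquiv.range]
      rw [Submodule.map_span] at hmap
      rw [eq_top_iff, ← hmap]
      apply Submodule.span_le.mpr
      intro a ha
      obtain ⟨v, ⟨x, h, rfl⟩, rfl⟩ := ha
      apply Submodule.subset_span
      exact ⟨x, h, by show U ((V x) h) = _; exact hUk x h⟩
end
end

section
/- Let Γ be a *-semigroup acting on a nonempty set X, Z an ordered *-space, H a VE-space over Z, and k : X × X → L*(H) a kernel invariant under the action of Γ on X. Suppose that for some fixed α, β, γ ∈ Γ one has k(y, α·x) + k(y, β·x) = k(y, γ·x) for all x, y ∈ X. Then for any minimal Γ-invariant VE-space linearisation (K, π, V) of k, the representation satisfies π(α) + π(β) = π(γ). -/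
noncomputable section

/-- if a `Γ`-invariant kernel `k` satisfies
`k(y, α·x) + k(y, β·x) = k(y, γ·x)` for all `x, y`, then any minimal `Γ`-invariant
VE-space linearisation `(K, π, V)` of `k` satisfies `π(α) + π(β) = π(γ)`. -/
theorem minimal_invariant_linearisation_additive
    {Z : Type*} [AddCommGroup Z] [Module ℂ Z] [StarAddMonoid Z] [StarModule ℂ Z]
    (O : StarCone Z)
    {H : Type*} [AddCommGroup H] [Module ℂ H] (gH : Gramian O H)
    {Γ : Type*} [Semigroup Γ] [StarMul Γ]
    {X : Type*} [Nonempty X]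
    (act : Γ → X → X)
    (hact : ∀ (ξ η : Γ) (x : X), act ξ (act η x) = act (ξ * η) x)
    (k : X → X → (H →ₗ[ℂ] H))
    (hadj : ∀ x y : X, Adjointable gH gH (k x y))
    (hinv : ∀ (ξ : Γ) (x y : X), k y (act ξ x) = k (act (star ξ) y) x)
    (α β γ : Γ)
    (hsum : ∀ x y : X, k y (act α x) + k y (act β x) = k y (act γ x))
    {K : Type*} [AddCommGroup K] [Module ℂ K] (gK : Gramian O K)
    (V : X → (H →ₗ[ℂ] K)) (Vadj : X → (K →ₗ[ℂ] H)) (π : Γ → (K →ₗ[ℂ] K))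
    -- `(K, V)` is a VE-space linearisation of `k`
    (hV : ∀ (x : X) (e : H) (f : K), gK.inner (V x e) f = gH.inner e (Vadj x f))
    (hk : ∀ (x y : X) (h : H), k x y h = Vadj x (V y h))
    -- `π` is a `*`-representation: multiplicative with `π(ξ*) = π(ξ)*`
    (hπmul : ∀ ξ η : Γ, π (ξ * η) = (π ξ).comp (π η))
    (hπstar : ∀ (ξ : Γ) (f g : K), gK.inner (π ξ f) g = gK.inner f (π (star ξ) g))
    -- `π` and `V` are related by `V(ξ·x) = π(ξ) V(x)`
    (hπV : ∀ (ξ : Γ) (x : X) (h : H), V (act ξ x) h = π ξ (V x h))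
    -- minimality
    (hmin : Submodule.span ℂ {v : K | ∃ (x : X) (h : H), V x h = v} = ⊤) :
    π α + π β = π γ := by
  -- inner with zero is zero
  have hzK : ∀ w : K, gK.inner w 0 = 0 := by
    intro w
    have h := gK.add_right w 0 0
    rw [add_zero] at h
    exact (left_eq_add.mp h)
  have hzH : ∀ f : H, gH.inner f 0 = 0 := by
    intro f
    have h := gH.add_right f 0 0
    rw [add_zero] at h
    exact (left_eq_add.mp h)
  have key : ∀ (x : X) (h : H), V (act α x) h + V (act β x) h - V (act γ x) h = 0 := by
    intro x h
    set w : K := V (act α x) h + V (act β x) h - V (act γ x) h with hw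
    have horth : ∀ u : K, gK.inner w u = 0 := by
      intro u
      have hN : u ∈ Submodule.span ℂ {v : K | ∃ (x : X) (h : H), V x h = v} := by
        rw [hmin]; trivial
      induction hN using Submodule.span_induction with
      | mem v hv =>
        obtain ⟨y, f, rfl⟩ := hv
        have hVw : Vadj y w = 0 := by
          have hs := congrArg (fun T : H →ₗ[ℂ] H => T h) (hsum x y)
          simp only [LinearMap.add_apply] at hs
          rw [hk, hk, hk] at hs
          rw [hw]
          rw [map_sub, map_add, hs]
          abel
        have h1 : gK.inner (V y f) w = 0 := by
          rw [hV, hVw, hzH]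
        rw [gK.conj_symm, h1, star_zero]
      | zero => exact hzK w
      | add a b _ _ ha hb =>
        rw [gK.add_right, ha, hb, add_zero]
      | smul c a _ ha =>
        rw [gK.smul_right, ha, smul_zero]
    exact gK.definite w (horth w)
  have hT : (π α + π β - π γ : K →ₗ[ℂ] K) = 0 := by
    apply LinearMap.ext
    intro v
    have hv : v ∈ Submodule.span ℂ {v : K | ∃ (x : X) (h : H), V x h = v} := by
      rw [hmin]; trivial
    have hle : Submodule.span ℂ {v : K | ∃ (x : X) (h : H), V x h = v} ≤
        LinearMap.ker (π α + π β - π γ) := by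
      apply Submodule.span_le.mpr
      rintro v ⟨x, h, rfl⟩
      simp only [SetLike.mem_coe, LinearMap.mem_ker, LinearMap.sub_apply, LinearMap.add_apply]
      rw [← hπV, ← hπV, ← hπV]
      exact key x h
    simpa using hle hv
  exact sub_eq_zero.mp hT
end
end
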